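/- (Admissible state-action bounds.) In a transition-independent multi-agent MDP with reward partitioned as R = Σ_{i∈N} R_i, let U_i and L_i be the recursive upper- and lower-bound functions (U_i(h,·) = L_i(h,·) = 0; U_i(t,x) = max, and L_i(t,x) = min, over all (s,a,s') with s^i = x and T(s,a,s') > 0 of R_i(s,a,s') + U_i(t+1,s'^i), respectively R_i(s,a,s') + L_i(t+1,s'^i)). Define the optimal state-action value Q*_t(s,a) = Σ_{s'∈S} T(s,a,s')·(R(s,a,s') + V*_{t+1}(s')) for t < h. Then for every t < h, s ∈ S, a ∈ A: Σ_{s'} T(s,a,s')·(R(s,a,s') + Σ_{i∈N} L_i(t+1, s'^i)) ≤ Q*_t(s,a) ≤ Σ_{s'} T(s,a,s')·(R(s,a,s') + Σ_{i∈N} U_i(t+1, s'^i)). -/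

import Mathlib

/-!
STATEMENT 12 (admissible state-action bounds): in a transition-independent multi-agent
MDP with reward partitioned as `R = Σ_{i∈N} R_i` and recursive bound functions `U_i`,
`L_i` (maxima/minima expressed with `⨆`/`⨅` over the finite nonempty subtypes), the
optimal state-action value `Q*_t(s,a) = Σ_{s'} T(s,a,s')·(R(s,a,s') + V*_{t+1}(s'))`
satisfies, for every `t < h`, `s`, `a`:
`Σ_{s'} T(s,a,s')·(R(s,a,s') + Σ_i L_i(t+1, s'^i)) ≤ Q*_t(s,a) ≤
 Σ_{s'} T(s,a,s')·(R(s,a,s') + Σ_i U_i(t+1, s'^i))`.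
-/
theorem statement12
    {N : Type} [Fintype N] [DecidableEq N]
    (S : N → Type) (A : N → Type)
    [∀ i, Fintype (S i)] [∀ i, Nonempty (S i)]
    [∀ i, Fintype (A i)] [∀ i, Nonempty (A i)]
    (h : ℕ)
    (Ti : (i : N) → S i → A i → S i → ℝ)
    (hTi0 : ∀ i x a y, 0 ≤ Ti i x a y)
    (hTi1 : ∀ i x a, ∑ y, Ti i x a y = 1)
    -- the factored joint transition function
    (T : ((i : N) → S i) → ((i : N) → A i) → ((i : N) → S i) → ℝ)
    (hT : ∀ s a s', T s a s' = ∏ i, Ti i (s i) (a i) (s' i))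
    -- the reward, partitioned over the agents
    (R : ((i : N) → S i) → ((i : N) → A i) → ((i : N) → S i) → ℝ)
    (Ri : N → ((i : N) → S i) → ((i : N) → A i) → ((i : N) → S i) → ℝ)
    (hR : ∀ s a s', R s a s' = ∑ i, Ri i s a s')
    -- the recursive upper-bound functions
    (U : (i : N) → ℕ → S i → ℝ)
    (hUh : ∀ i x, U i h x = 0)
    (hU : ∀ t, t < h → ∀ (i : N) (x : S i),
      U i t x = ⨆ p : {p : ((i : N) → S i) × ((i : N) → A i) × ((i : N) → S i) //
          p.1 i = x ∧ 0 < T p.1 p.2.1 p.2.2},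
        (Ri i p.1.1 p.1.2.1 p.1.2.2 + U i (t + 1) (p.1.2.2 i)))
    -- the recursive lower-bound functions
    (L : (i : N) → ℕ → S i → ℝ)
    (hLh : ∀ i x, L i h x = 0)
    (hL : ∀ t, t < h → ∀ (i : N) (x : S i),
      L i t x = ⨅ p : {p : ((i : N) → S i) × ((i : N) → A i) × ((i : N) → S i) //
          p.1 i = x ∧ 0 < T p.1 p.2.1 p.2.2},
        (Ri i p.1.1 p.1.2.1 p.1.2.2 + L i (t + 1) (p.1.2.2 i)))
    -- the optimal value function
    (Vstar : ℕ → ((i : N) → S i) → ℝ)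
    (hVh : ∀ s, Vstar h s = 0)
    (hV : ∀ t, t < h → ∀ s,
      Vstar t s = ⨆ a : (i : N) → A i,
        ∑ s', T s a s' * (R s a s' + Vstar (t + 1) s'))
    -- the optimal state-action value function
    (Qstar : ℕ → ((i : N) → S i) → ((i : N) → A i) → ℝ)
    (hQ : ∀ t, t < h → ∀ s a,
      Qstar t s a = ∑ s', T s a s' * (R s a s' + Vstar (t + 1) s')) :
    ∀ t, t < h → ∀ (s : (i : N) → S i) (a : (i : N) → A i),
      (∑ s', T s a s' * (R s a s' + ∑ i, L i (t + 1) (s' i))) ≤ Qstar t s a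
      ∧ Qstar t s a ≤ ∑ s', T s a s' * (R s a s' + ∑ i, U i (t + 1) (s' i)) := by
  have hTnn : ∀ s a s', 0 ≤ T s a s' := by
    intro s a s'
    rw [hT]
    exact Finset.prod_nonneg fun i _ => hTi0 i (s i) (a i) (s' i)
  have hTsum : ∀ s a, ∑ s', T s a s' = 1 := by
    intro s a
    have : ∑ s' : (i : N) → S i, ∏ i, Ti i (s i) (a i) (s' i)
        = ∏ i, ∑ y, Ti i (s i) (a i) y := by
      rw [Finset.prod_univ_sum, ← Fintype.piFinset_univ]
    simp only [hT]
    rw [this]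
    simp [hTi1]
  -- key lemma: L bounds Vstar from below and U from above
  have key : ∀ d t, t + d = h → ∀ s : (i : N) → S i,
      (∑ i, L i t (s i)) ≤ Vstar t s ∧ Vstar t s ≤ ∑ i, U i t (s i) := by
    intro d
    induction d with
    | zero =>
      intro t ht s
      simp only [Nat.add_zero] at ht
      subst ht
      simp [hVh, hUh, hLh]
    | succ d ih =>
      intro t ht s
      have htlt : t < h := by omega
      have ht1 : t + 1 + d = h := by omega
      constructor
      · -- lower bound
        have a0 : (i : N) → A i := Classical.arbitrary _
        have hle : ∑ i, L i t (s i)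
            ≤ ∑ s', T s a0 s' * (R s a0 s' + Vstar (t + 1) s') := by
          have hc : ∑ i, L i t (s i)
              = ∑ s', T s a0 s' * (∑ i, L i t (s i)) := by
            rw [← Finset.sum_mul, hTsum, one_mul]
          rw [hc]
          refine Finset.sum_le_sum fun s' _ => ?_
          rcases eq_or_lt_of_le (hTnn s a0 s') with h0 | hpos
          · rw [← h0]; simp
          · refine mul_le_mul_of_nonneg_left ?_ (le_of_lt hpos)
            rw [hR]
            have hV' := (ih (t + 1) ht1 s').1
            calc ∑ i, L i t (s i)
                ≤ ∑ i, (Ri i s a0 s' + L i (t + 1) (s' i)) := by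
                  refine Finset.sum_le_sum fun i _ => ?_
                  rw [hL t htlt i (s i)]
                  exact ciInf_le
                    (f := fun p : {p : ((i : N) → S i) × ((i : N) → A i) ×
                        ((i : N) → S i) // p.1 i = s i ∧ 0 < T p.1 p.2.1 p.2.2} =>
                      Ri i p.1.1 p.1.2.1 p.1.2.2 + L i (t + 1) (p.1.2.2 i))
                    (Set.Finite.bddBelow (Set.finite_range _))
                    ⟨(s, a0, s'), rfl, hpos⟩
              _ = ∑ i, Ri i s a0 s' + ∑ i, L i (t + 1) (s' i) :=
                  Finset.sum_add_distrib
              _ ≤ ∑ i, Ri i s a0 s' + Vstar (t + 1) s' := by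
                  exact add_le_add le_rfl hV'
        rw [hV t htlt s]
        exact hle.trans (le_ciSup
          (f := fun a => ∑ s', T s a s' * (R s a s' + Vstar (t + 1) s'))
          (Set.Finite.bddAbove (Set.finite_range _)) a0)
      · -- upper bound
        rw [hV t htlt s]
        refine ciSup_le fun a => ?_
        have hc : ∑ s', T s a s' * (∑ i, U i t (s i)) = ∑ i, U i t (s i) := by
          rw [← Finset.sum_mul, hTsum, one_mul]
        rw [← hc]
        refine Finset.sum_le_sum fun s' _ => ?_
        rcases eq_or_lt_of_le (hTnn s a s') with h0 | hpos
        · rw [← h0]; simp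
        · refine mul_le_mul_of_nonneg_left ?_ (le_of_lt hpos)
          rw [hR]
          have hV' := (ih (t + 1) ht1 s').2
          calc ∑ i, Ri i s a s' + Vstar (t + 1) s'
              ≤ ∑ i, Ri i s a s' + ∑ i, U i (t + 1) (s' i) :=
                add_le_add le_rfl hV'
            _ = ∑ i, (Ri i s a s' + U i (t + 1) (s' i)) :=
                Finset.sum_add_distrib.symm
            _ ≤ ∑ i, U i t (s i) := by
                refine Finset.sum_le_sum fun i _ => ?_
                rw [hU t htlt i (s i)]
                exact le_ciSup
                  (f := fun p : {p : ((i : N) → S i) × ((i : N) → A i) ×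
                      ((i : N) → S i) // p.1 i = s i ∧ 0 < T p.1 p.2.1 p.2.2} =>
                    Ri i p.1.1 p.1.2.1 p.1.2.2 + U i (t + 1) (p.1.2.2 i))
                  (Set.Finite.bddAbove (Set.finite_range _))
                  ⟨(s, a, s'), rfl, hpos⟩
  intro t ht s a
  rw [hQ t ht s a]
  have hkey := key (h - (t + 1)) (t + 1) (by omega)
  constructor
  · refine Finset.sum_le_sum fun s' _ => ?_
    rcases eq_or_lt_of_le (hTnn s a s') with h0 | hpos
    · rw [← h0]; simp
    · exact mul_le_mul_of_nonneg_left (add_le_add le_rfl (hkey s').1)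
        (le_of_lt hpos)
  · refine Finset.sum_le_sum fun s' _ => ?_
    rcases eq_or_lt_of_le (hTnn s a s') with h0 | hpos
    · rw [← h0]; simp
    · exact mul_le_mul_of_nonneg_left (add_le_add le_rfl (hkey s').2)
        (le_of_lt hpos)
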